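/- arXiv:1408.0324 — 3 statements merged into one kernel-verified Lean document; each statement's English description precedes it below -/
import Mathlib

section
/- Let (Ω, F, μ) be a probability space and let U, W, ε_M, ε_T, ε_Y be square-integrable real random variables, each with mean 0 and variance 1, such that Cov(U, W) = ρ and all other pairs among {U, W, ε_M, ε_T, ε_Y} have covariance 0. Let a, c, d, ρ be real numbers with a² ≤ 1, d² ≤ 1, c² ≤ 1, ρ² ≤ 1, and 1 − (acρ)² > 0. Define M := c·W + √(1−c²)·ε_M, T := a·U + √(1−a²)·ε_T, and Y := d·W + √(1−d²)·ε_Y (the M-structure with b = 0). Then β_T / Cov(T,Y) · (adρ) = adρ·(1−c²)/(1−(acρ)²) and, whenever adρ ≠ 0, |β_T| / |Cov(T,Y)| = (1−c²)/(1−(acρ)²) ≤ 1, i.e., the adjusted estimator has absolute bias no larger than the unadjusted one. -/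
open MeasureTheory ProbabilityTheory

/-- Covariance of two real random variables: `Cov(X,Y) = E[XY] - E[X] E[Y]`. -/
noncomputable def covar {Ω : Type*} [MeasurableSpace Ω] (μ : Measure Ω) (X Y : Ω → ℝ) : ℝ :=
  (∫ ω, X ω * Y ω ∂μ) - (∫ ω, X ω ∂μ) * (∫ ω, Y ω ∂μ)

/-- The population OLS coefficient on `T` when regressing `Y` on `(T, M)`. -/
noncomputable def betaT {Ω : Type*} [MeasurableSpace Ω] (μ : Measure Ω) (Y T M : Ω → ℝ) : ℝ :=
  (covar μ Y T * variance M μ - covar μ Y M * covar μ M T) /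
    (variance T μ * variance M μ - (covar μ M T) ^ 2)

lemma intg_mul {Ω : Type*} [MeasurableSpace Ω] {μ : Measure Ω} {f g : Ω → ℝ}
    (hf : MemLp f 2 μ) (hg : MemLp g 2 μ) : Integrable (fun ω => f ω * g ω) μ := by
  have h := (((hf.add hg).integrable_sq.sub hf.integrable_sq).sub hg.integrable_sq).const_mul (1/2 : ℝ)
  convert h using 1
  funext ω
  simp only [Pi.sub_apply, Pi.add_apply]
  ring

lemma covar_comb {Ω : Type*} [MeasurableSpace Ω] {μ : Measure Ω} [IsProbabilityMeasure μ]
    {X X' Y Y' : Ω → ℝ} (hX : MemLp X 2 μ) (hX' : MemLp X' 2 μ)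
    (hY : MemLp Y 2 μ) (hY' : MemLp Y' 2 μ) (p q r s : ℝ) :
    covar μ (fun ω => p * X ω + q * X' ω) (fun ω => r * Y ω + s * Y' ω) =
      p * r * covar μ X Y + p * s * covar μ X Y' + q * r * covar μ X' Y
        + q * s * covar μ X' Y' := by
  have h1 : Integrable (fun ω => X ω * Y ω) μ := intg_mul hX hY
  have h2 : Integrable (fun ω => X ω * Y' ω) μ := intg_mul hX hY'
  have h3 : Integrable (fun ω => X' ω * Y ω) μ := intg_mul hX' hY
  have h4 : Integrable (fun ω => X' ω * Y' ω) μ := intg_mul hX' hY'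
  have e1 : (∫ ω, (p * X ω + q * X' ω) * (r * Y ω + s * Y' ω) ∂μ)
      = p * r * (∫ ω, X ω * Y ω ∂μ) + p * s * (∫ ω, X ω * Y' ω ∂μ)
        + q * r * (∫ ω, X' ω * Y ω ∂μ) + q * s * (∫ ω, X' ω * Y' ω ∂μ) := by
    have h : (fun ω => (p * X ω + q * X' ω) * (r * Y ω + s * Y' ω))
        = fun ω => p * r * (X ω * Y ω) + (p * s * (X ω * Y' ω)
          + (q * r * (X' ω * Y ω) + q * s * (X' ω * Y' ω))) := by funext ω; ring
    have i34 : Integrable (fun ω => q * r * (X' ω * Y ω) + q * s * (X' ω * Y' ω)) μ :=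
      (h3.const_mul _).add (h4.const_mul _)
    have i234 : Integrable (fun ω => p * s * (X ω * Y' ω)
        + (q * r * (X' ω * Y ω) + q * s * (X' ω * Y' ω))) μ := (h2.const_mul _).add i34
    rw [h, integral_add (h1.const_mul _) i234, integral_add (h2.const_mul _) i34,
      integral_add (h3.const_mul _) (h4.const_mul _),
      integral_const_mul, integral_const_mul, integral_const_mul, integral_const_mul]
    ring
  have e2 : (∫ ω, (p * X ω + q * X' ω) ∂μ) = p * (∫ ω, X ω ∂μ) + q * (∫ ω, X' ω ∂μ) := by
    have iX : Integrable (fun ω => p * X ω) μ := (hX.integrable one_le_two).const_mul _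
    have iX' : Integrable (fun ω => q * X' ω) μ := (hX'.integrable one_le_two).const_mul _
    rw [integral_add iX iX', integral_const_mul, integral_const_mul]
  have e3 : (∫ ω, (r * Y ω + s * Y' ω) ∂μ) = r * (∫ ω, Y ω ∂μ) + s * (∫ ω, Y' ω ∂μ) := by
    have iY : Integrable (fun ω => r * Y ω) μ := (hY.integrable one_le_two).const_mul _
    have iY' : Integrable (fun ω => s * Y' ω) μ := (hY'.integrable one_le_two).const_mul _
    rw [integral_add iY iY', integral_const_mul, integral_const_mul]
  simp only [covar, e1, e2, e3]
  ring

lemma covar_comm {Ω : Type*} [MeasurableSpace Ω] (μ : Measure Ω) (X Y : Ω → ℝ) :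
    covar μ X Y = covar μ Y X := by
  unfold covar
  rw [mul_comm (∫ ω, X ω ∂μ)]
  congr 1
  exact integral_congr_ae (Filter.Eventually.of_forall fun ω => mul_comm _ _)

lemma var_eq_covar {Ω : Type*} [MeasurableSpace Ω] {μ : Measure Ω} [IsProbabilityMeasure μ]
    {X : Ω → ℝ} (hX : MemLp X 2 μ) : variance X μ = covar μ X X := by
  rw [variance_eq_sub hX, covar]
  have h : (fun ω => X ω * X ω) = X ^ 2 := by funext ω; simp [pow_two]
  rw [h, ← pow_two]

/-- M-structure with `b = 0` (U is not a cause of M): the adjusted estimator has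
absolute bias no larger than the unadjusted one. -/
theorem stmt5 {Ω : Type*} [MeasurableSpace Ω] (μ : Measure Ω) [IsProbabilityMeasure μ]
    (U W εM εT εY : Ω → ℝ)
    (hU2 : MemLp U 2 μ) (hW2 : MemLp W 2 μ) (hεM2 : MemLp εM 2 μ)
    (hεT2 : MemLp εT 2 μ) (hεY2 : MemLp εY 2 μ)
    (hUm : ∫ ω, U ω ∂μ = 0) (hWm : ∫ ω, W ω ∂μ = 0) (hεMm : ∫ ω, εM ω ∂μ = 0)
    (hεTm : ∫ ω, εT ω ∂μ = 0) (hεYm : ∫ ω, εY ω ∂μ = 0)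
    (hUv : variance U μ = 1) (hWv : variance W μ = 1) (hεMv : variance εM μ = 1)
    (hεTv : variance εT μ = 1) (hεYv : variance εY μ = 1)
    (a c d ρ : ℝ)
    (hUW : covar μ U W = ρ)
    (hUεM : covar μ U εM = 0) (hUεT : covar μ U εT = 0) (hUεY : covar μ U εY = 0)
    (hWεM : covar μ W εM = 0) (hWεT : covar μ W εT = 0) (hWεY : covar μ W εY = 0)
    (hεMεT : covar μ εM εT = 0) (hεMεY : covar μ εM εY = 0) (hεTεY : covar μ εT εY = 0)
    (ha : a ^ 2 ≤ 1) (hd : d ^ 2 ≤ 1) (hc : c ^ 2 ≤ 1) (hρ : ρ ^ 2 ≤ 1)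
    (hpos : 0 < 1 - (a * c * ρ) ^ 2)
    (M T Y : Ω → ℝ)
    (hM : M = fun ω => c * W ω + Real.sqrt (1 - c ^ 2) * εM ω)
    (hT : T = fun ω => a * U ω + Real.sqrt (1 - a ^ 2) * εT ω)
    (hY : Y = fun ω => d * W ω + Real.sqrt (1 - d ^ 2) * εY ω) :
    betaT μ Y T M / covar μ T Y * (a * d * ρ) =
        a * d * ρ * (1 - c ^ 2) / (1 - (a * c * ρ) ^ 2) ∧
      (a * d * ρ ≠ 0 →
        |betaT μ Y T M| / |covar μ T Y| = (1 - c ^ 2) / (1 - (a * c * ρ) ^ 2) ∧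
          (1 - c ^ 2) / (1 - (a * c * ρ) ^ 2) ≤ 1) := by
  set sa := Real.sqrt (1 - a ^ 2) with hsa
  set sc := Real.sqrt (1 - c ^ 2) with hsc
  set sd := Real.sqrt (1 - d ^ 2) with hsd
  have hsc2 : sc ^ 2 = 1 - c ^ 2 := Real.sq_sqrt (by linarith)
  have hsa2 : sa ^ 2 = 1 - a ^ 2 := Real.sq_sqrt (by linarith)
  have cWW : covar μ W W = 1 := by rw [← var_eq_covar hW2, hWv]
  have cUU : covar μ U U = 1 := by rw [← var_eq_covar hU2, hUv]
  have cMM : covar μ εM εM = 1 := by rw [← var_eq_covar hεM2, hεMv]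
  have cTT : covar μ εT εT = 1 := by rw [← var_eq_covar hεT2, hεTv]
  have hWU : covar μ W U = ρ := by rw [covar_comm, hUW]
  have hεMW : covar μ εM W = 0 := by rw [covar_comm, hWεM]
  have hεTU : covar μ εT U = 0 := by rw [covar_comm, hUεT]
  have hεMU : covar μ εM U = 0 := by rw [covar_comm, hUεM]
  have hεTεM : covar μ εT εM = 0 := by rw [covar_comm, hεMεT]
  have hεYW : covar μ εY W = 0 := by rw [covar_comm, hWεY]
  have hεYεM : covar μ εY εM = 0 := by rw [covar_comm, hεMεY]
  have hεTW : covar μ εT W = 0 := by rw [covar_comm, hWεT]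
  have covTY : covar μ T Y = a * d * ρ := by
    rw [hT, hY, covar_comb hU2 hεT2 hW2 hεY2, hUW, hUεY, hεTεY, hεTW]
    ring
  have covYM : covar μ Y M = d * c := by
    rw [hY, hM, covar_comb hW2 hεY2 hW2 hεM2, cWW, hWεM, hεYW, hεYεM]
    ring
  have covMT : covar μ M T = a * c * ρ := by
    rw [hM, hT, covar_comb hW2 hεM2 hU2 hεT2, hWU, hWεT, hεMU, hεMεT]
    ring
  have covYT : covar μ Y T = a * d * ρ := by rw [covar_comm, covTY]
  have hM2 : MemLp M 2 μ := by
    rw [hM]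
    have h := (hW2.const_mul c).add (hεM2.const_mul sc)
    simpa [Pi.add_def] using h
  have hT2 : MemLp T 2 μ := by
    rw [hT]
    have h := (hU2.const_mul a).add (hεT2.const_mul sa)
    simpa [Pi.add_def] using h
  have varM : variance M μ = 1 := by
    rw [var_eq_covar hM2, hM, covar_comb hW2 hεM2 hW2 hεM2, cWW, cMM, hWεM, hεMW]
    linear_combination hsc2
  have varT : variance T μ = 1 := by
    rw [var_eq_covar hT2, hT, covar_comb hU2 hεT2 hU2 hεT2, cUU, cTT, hUεT, hεTU]
    linear_combination hsa2
  have hβ : betaT μ Y T M = a * d * ρ * (1 - c ^ 2) / (1 - (a * c * ρ) ^ 2) := by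
    rw [betaT, covYT, covYM, covMT, varM, varT]
    ring_nf
  have hD : (1 : ℝ) - (a * c * ρ) ^ 2 ≠ 0 := ne_of_gt hpos
  have hle : (1 - c ^ 2) / (1 - (a * c * ρ) ^ 2) ≤ 1 := by
    rw [div_le_one hpos]
    have h1 : a ^ 2 * ρ ^ 2 ≤ 1 := mul_le_one₀ ha (sq_nonneg ρ) hρ
    have h2 : (a * c * ρ) ^ 2 ≤ c ^ 2 := by
      calc (a * c * ρ) ^ 2 = c ^ 2 * (a ^ 2 * ρ ^ 2) := by ring
        _ ≤ c ^ 2 * 1 := mul_le_mul_of_nonneg_left h1 (sq_nonneg c)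
        _ = c ^ 2 := mul_one _
    linarith
  constructor
  · rcases eq_or_ne (a * d * ρ) 0 with hk | hk
    · rw [hβ, covTY, hk]
      simp
    · rw [hβ, covTY]
      field_simp
  · intro hk
    refine ⟨?_, hle⟩
    rw [hβ, covTY, abs_div, abs_mul, abs_of_nonneg (by linarith : (0:ℝ) ≤ 1 - c ^ 2),
      abs_of_pos hpos]
    rw [mul_div_assoc, mul_div_cancel_left₀ _ (abs_ne_zero.mpr hk)]
end

section
/- Let (Ω, F, μ) be a probability space and let U, W, ε_M, ε_T, ε_Y be square-integrable real random variables, each with mean 0 and variance 1, such that Cov(U, W) = ρ and all other pairs among {U, W, ε_M, ε_T, ε_Y} have covariance 0. Let a, b, d, ρ be real numbers with a² ≤ 1, d² ≤ 1, b² ≤ 1, ρ² ≤ 1, and 1 − (ab)² > 0. Define M := b·U + √(1−b²)·ε_M, T := a·U + √(1−a²)·ε_T, and Y := d·W + √(1−d²)·ε_Y (the M-structure with c = 0). Then, whenever adρ ≠ 0, |β_T| / |Cov(T,Y)| = (1−b²)/(1−(ab)²) ≤ 1, i.e., the adjusted estimator has absolute bias no larger than the unadjusted one. -/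
open MeasureTheory ProbabilityTheory

section aux

variable {Ω : Type*} [MeasurableSpace Ω] {μ : Measure Ω}

lemma memL2_mul_int {f g : Ω → ℝ} (hf : MemLp f 2 μ) (hg : MemLp g 2 μ) :
    Integrable (fun ω => f ω * g ω) μ := by
  have h12 : (1 : ENNReal) / 1 = 1 / 2 + 1 / 2 := by
    rw [ENNReal.div_add_div_same, div_one, one_add_one_eq_two]
    exact (ENNReal.div_self (by norm_num) (by norm_num)).symm
  have h : MemLp (f • g) 1 μ := hg.smul hf
  simpa [Pi.smul_apply, smul_eq_mul, Pi.mul_def] using memLp_one_iff_integrable.mp h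

lemma covar_lin [IsProbabilityMeasure μ] (X1 X2 Y1 Y2 : Ω → ℝ)
    (h1 : MemLp X1 2 μ) (h2 : MemLp X2 2 μ) (h3 : MemLp Y1 2 μ) (h4 : MemLp Y2 2 μ)
    (c1 c2 c3 c4 : ℝ) :
    covar μ (fun ω => c1 * X1 ω + c2 * X2 ω) (fun ω => c3 * Y1 ω + c4 * Y2 ω)
      = c1 * c3 * covar μ X1 Y1 + c1 * c4 * covar μ X1 Y2
        + c2 * c3 * covar μ X2 Y1 + c2 * c4 * covar μ X2 Y2 := by
  have i11 := memL2_mul_int h1 h3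
  have i12 := memL2_mul_int h1 h4
  have i21 := memL2_mul_int h2 h3
  have i22 := memL2_mul_int h2 h4
  have iC : Integrable (fun ω => c2 * c3 * (X2 ω * Y1 ω) + c2 * c4 * (X2 ω * Y2 ω)) μ :=
    (i21.const_mul _).add (i22.const_mul _)
  have iB : Integrable (fun ω => c1 * c4 * (X1 ω * Y2 ω)
      + (c2 * c3 * (X2 ω * Y1 ω) + c2 * c4 * (X2 ω * Y2 ω))) μ :=
    (i12.const_mul _).add iC
  have key : (∫ ω, (c1 * X1 ω + c2 * X2 ω) * (c3 * Y1 ω + c4 * Y2 ω) ∂μ)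
      = c1 * c3 * (∫ ω, X1 ω * Y1 ω ∂μ) + c1 * c4 * (∫ ω, X1 ω * Y2 ω ∂μ)
        + c2 * c3 * (∫ ω, X2 ω * Y1 ω ∂μ) + c2 * c4 * (∫ ω, X2 ω * Y2 ω ∂μ) := by
    have e0 : (∫ ω, (c1 * X1 ω + c2 * X2 ω) * (c3 * Y1 ω + c4 * Y2 ω) ∂μ)
        = ∫ ω, c1 * c3 * (X1 ω * Y1 ω) + (c1 * c4 * (X1 ω * Y2 ω)
          + (c2 * c3 * (X2 ω * Y1 ω) + c2 * c4 * (X2 ω * Y2 ω))) ∂μ :=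
      integral_congr_ae (by filter_upwards with ω; ring)
    rw [e0, integral_add (i11.const_mul _) iB, integral_add (i12.const_mul _) iC,
      integral_add (i21.const_mul _) (i22.const_mul _),
      integral_const_mul, integral_const_mul, integral_const_mul, integral_const_mul]
    ring
  have m1 : (∫ ω, (c1 * X1 ω + c2 * X2 ω) ∂μ)
      = c1 * (∫ ω, X1 ω ∂μ) + c2 * (∫ ω, X2 ω ∂μ) := by
    rw [integral_add ((h1.integrable one_le_two).const_mul _)
        ((h2.integrable one_le_two).const_mul _), integral_const_mul, integral_const_mul]
  have m2 : (∫ ω, (c3 * Y1 ω + c4 * Y2 ω) ∂μ)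
      = c3 * (∫ ω, Y1 ω ∂μ) + c4 * (∫ ω, Y2 ω ∂μ) := by
    rw [integral_add ((h3.integrable one_le_two).const_mul _)
        ((h4.integrable one_le_two).const_mul _), integral_const_mul, integral_const_mul]
  simp only [covar, key, m1, m2]
  ring

lemma variance_eq_covar [IsProbabilityMeasure μ] {X : Ω → ℝ} (hX : MemLp X 2 μ) :
    variance X μ = covar μ X X := by
  rw [variance_eq_sub hX, covar]
  congr 1
  · apply integral_congr_ae; filter_upwards with ω; simp [sq]
  · rw [sq]

end aux

/-- M-structure with `c = 0` (W is not a cause of M): the adjusted estimator has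
absolute bias no larger than the unadjusted one. -/
theorem stmt6 {Ω : Type*} [MeasurableSpace Ω] (μ : Measure Ω) [IsProbabilityMeasure μ]
    (U W εM εT εY : Ω → ℝ)
    (hU2 : MemLp U 2 μ) (hW2 : MemLp W 2 μ) (hεM2 : MemLp εM 2 μ)
    (hεT2 : MemLp εT 2 μ) (hεY2 : MemLp εY 2 μ)
    (hUm : ∫ ω, U ω ∂μ = 0) (hWm : ∫ ω, W ω ∂μ = 0) (hεMm : ∫ ω, εM ω ∂μ = 0)
    (hεTm : ∫ ω, εT ω ∂μ = 0) (hεYm : ∫ ω, εY ω ∂μ = 0)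
    (hUv : variance U μ = 1) (hWv : variance W μ = 1) (hεMv : variance εM μ = 1)
    (hεTv : variance εT μ = 1) (hεYv : variance εY μ = 1)
    (a b d ρ : ℝ)
    (hUW : covar μ U W = ρ)
    (hUεM : covar μ U εM = 0) (hUεT : covar μ U εT = 0) (hUεY : covar μ U εY = 0)
    (hWεM : covar μ W εM = 0) (hWεT : covar μ W εT = 0) (hWεY : covar μ W εY = 0)
    (hεMεT : covar μ εM εT = 0) (hεMεY : covar μ εM εY = 0) (hεTεY : covar μ εT εY = 0)
    (ha : a ^ 2 ≤ 1) (hd : d ^ 2 ≤ 1) (hb : b ^ 2 ≤ 1) (hρ : ρ ^ 2 ≤ 1)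
    (hpos : 0 < 1 - (a * b) ^ 2)
    (M T Y : Ω → ℝ)
    (hM : M = fun ω => b * U ω + Real.sqrt (1 - b ^ 2) * εM ω)
    (hT : T = fun ω => a * U ω + Real.sqrt (1 - a ^ 2) * εT ω)
    (hY : Y = fun ω => d * W ω + Real.sqrt (1 - d ^ 2) * εY ω)
    (hadρ : a * d * ρ ≠ 0) :
    |betaT μ Y T M| / |covar μ T Y| = (1 - b ^ 2) / (1 - (a * b) ^ 2) ∧
      (1 - b ^ 2) / (1 - (a * b) ^ 2) ≤ 1 := by
  have sqa : Real.sqrt (1 - a ^ 2) ^ 2 = 1 - a ^ 2 :=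
    Real.sq_sqrt (by linarith)
  have sqb : Real.sqrt (1 - b ^ 2) ^ 2 = 1 - b ^ 2 :=
    Real.sq_sqrt (by linarith)
  have sqd : Real.sqrt (1 - d ^ 2) ^ 2 = 1 - d ^ 2 :=
    Real.sq_sqrt (by linarith)
  -- covariance of variables with themselves
  have cUU : covar μ U U = 1 := by rw [← variance_eq_covar hU2, hUv]
  have cWW : covar μ W W = 1 := by rw [← variance_eq_covar hW2, hWv]
  have cMM : covar μ εM εM = 1 := by rw [← variance_eq_covar hεM2, hεMv]
  have cTT : covar μ εT εT = 1 := by rw [← variance_eq_covar hεT2, hεTv]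
  have cYY : covar μ εY εY = 1 := by rw [← variance_eq_covar hεY2, hεYv]
  have csymm : ∀ X Y' : Ω → ℝ, covar μ X Y' = covar μ Y' X := by
    intro X Y'
    unfold covar
    rw [mul_comm (∫ ω, X ω ∂μ)]
    congr 1
    apply integral_congr_ae; filter_upwards with ω; ring
  -- Memℒp of combinations
  have hM2 : MemLp M 2 μ := by
    rw [hM]
    exact ((hU2.const_mul b).add (hεM2.const_mul _))
  have hT2 : MemLp T 2 μ := by
    rw [hT]
    exact ((hU2.const_mul a).add (hεT2.const_mul _))
  have hY2 : MemLp Y 2 μ := by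
    rw [hY]
    exact ((hW2.const_mul d).add (hεY2.const_mul _))
  -- key covariance computations
  have cTY : covar μ T Y = a * d * ρ := by
    rw [hT, hY, covar_lin U εT W εY hU2 hεT2 hW2 hεY2, hUW, hUεY, csymm εT W, hWεT, hεTεY]
    ring
  have cYT : covar μ Y T = a * d * ρ := by rw [hT, hY] at cTY ⊢; rw [csymm, cTY]
  have cYM : covar μ Y M = d * b * ρ := by
    rw [hY, hM, covar_lin W εY U εM hW2 hεY2 hU2 hεM2, csymm W U, hUW, hWεM, csymm εY U, hUεY,
      csymm εY εM, hεMεY]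
    ring
  have cMT : covar μ M T = a * b := by
    rw [hM, hT, covar_lin U εM U εT hU2 hεM2 hU2 hεT2, cUU, hUεT, csymm εM U, hUεM, hεMεT]
    ring
  have vT : variance T μ = 1 := by
    rw [variance_eq_covar hT2, hT, covar_lin U εT U εT hU2 hεT2 hU2 hεT2, cUU, hUεT,
      csymm εT U, hUεT, cTT]
    linear_combination sqa
  have vM : variance M μ = 1 := by
    rw [variance_eq_covar hM2, hM, covar_lin U εM U εM hU2 hεM2 hU2 hεM2, cUU, hUεM,
      csymm εM U, hUεM, cMM]
    linear_combination sqb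
  have hb' : 0 ≤ 1 - b ^ 2 := by linarith
  have hβ : betaT μ Y T M = a * d * ρ * (1 - b ^ 2) / (1 - (a * b) ^ 2) := by
    rw [betaT, cYT, cYM, cMT, vT, vM]
    field_simp
  constructor
  · rw [hβ, cTY, abs_div, abs_mul, abs_of_nonneg hb', abs_of_pos hpos]
    have hne : |a * d * ρ| ≠ 0 := abs_ne_zero.mpr hadρ
    field_simp
  · apply div_le_one_of_le₀ _ (le_of_lt hpos)
    have h1 : (a * b) ^ 2 ≤ b ^ 2 := by
      calc (a * b) ^ 2 = a ^ 2 * b ^ 2 := by ring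
        _ ≤ 1 * b ^ 2 := mul_le_mul_of_nonneg_right ha (sq_nonneg b)
        _ = b ^ 2 := one_mul _
    linarith
end

section
/- Let (Ω, F, μ) be a probability space and let U, W, ε_M, ε_T, ε_Y be square-integrable real random variables, each with mean 0 and variance 1, with all pairwise covariances among {U, W, ε_M, ε_T, ε_Y} equal to 0. Let a, b, c, d, g be real numbers with d² ≤ 1, b² + c² ≤ 1, and a² + g² ≤ 1. Define M := b·U + c·W + √(1−b²−c²)·ε_M, T := a·U + g·W + √(1−a²−g²)·ε_T, and Y := d·W + √(1−d²)·ε_Y. If 1 − (ab + cg)² ≠ 0, then the adjusted regression coefficient of T satisfies β_T = (dg − cd·(ab + cg)) / (1 − (ab + cg)²). -/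
open MeasureTheory ProbabilityTheory

lemma memLp_mul_int {Ω : Type*} [MeasurableSpace Ω] {μ : Measure Ω} {X Y : Ω → ℝ}
    (hX : MemLp X 2 μ) (hY : MemLp Y 2 μ) :
    Integrable (fun ω => X ω * Y ω) μ := by
  refine Integrable.mono' (hX.integrable_sq.add hY.integrable_sq)
    (hX.aestronglyMeasurable.mul hY.aestronglyMeasurable) (Filter.Eventually.of_forall fun ω => ?_)
  simp only [Pi.add_apply]
  rw [Real.norm_eq_abs, abs_mul]
  nlinarith [sq_abs (X ω), sq_abs (Y ω), two_mul_le_add_sq |X ω| |Y ω|,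
    abs_nonneg (X ω), abs_nonneg (Y ω)]

lemma covar_expand {Ω : Type*} [MeasurableSpace Ω] (μ : Measure Ω) [IsProbabilityMeasure μ]
    (X1 X2 X3 Y1 Y2 Y3 : Ω → ℝ)
    (h1 : MemLp X1 2 μ) (h2 : MemLp X2 2 μ) (h3 : MemLp X3 2 μ)
    (h4 : MemLp Y1 2 μ) (h5 : MemLp Y2 2 μ) (h6 : MemLp Y3 2 μ)
    (p q r s t u : ℝ) :
    covar μ (fun ω => p * X1 ω + q * X2 ω + r * X3 ω)
      (fun ω => s * Y1 ω + t * Y2 ω + u * Y3 ω) =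
    p*s*covar μ X1 Y1 + p*t*covar μ X1 Y2 + p*u*covar μ X1 Y3 +
    q*s*covar μ X2 Y1 + q*t*covar μ X2 Y2 + q*u*covar μ X2 Y3 +
    r*s*covar μ X3 Y1 + r*t*covar μ X3 Y2 + r*u*covar μ X3 Y3 := by
  have i11 : Integrable (fun ω => p*s*(X1 ω * Y1 ω)) μ := (memLp_mul_int h1 h4) |>.const_mul _
  have i12 : Integrable (fun ω => p*t*(X1 ω * Y2 ω)) μ := (memLp_mul_int h1 h5) |>.const_mul _
  have i13 : Integrable (fun ω => p*u*(X1 ω * Y3 ω)) μ := (memLp_mul_int h1 h6) |>.const_mul _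
  have i21 : Integrable (fun ω => q*s*(X2 ω * Y1 ω)) μ := (memLp_mul_int h2 h4) |>.const_mul _
  have i22 : Integrable (fun ω => q*t*(X2 ω * Y2 ω)) μ := (memLp_mul_int h2 h5) |>.const_mul _
  have i23 : Integrable (fun ω => q*u*(X2 ω * Y3 ω)) μ := (memLp_mul_int h2 h6) |>.const_mul _
  have i31 : Integrable (fun ω => r*s*(X3 ω * Y1 ω)) μ := (memLp_mul_int h3 h4) |>.const_mul _
  have i32 : Integrable (fun ω => r*t*(X3 ω * Y2 ω)) μ := (memLp_mul_int h3 h5) |>.const_mul _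
  have i33 : Integrable (fun ω => r*u*(X3 ω * Y3 ω)) μ := (memLp_mul_int h3 h6) |>.const_mul _
  have j2 : Integrable (fun ω => p*s*(X1 ω * Y1 ω) + p*t*(X1 ω * Y2 ω)) μ := i11.add i12
  have j3 : Integrable (fun ω => p*s*(X1 ω * Y1 ω) + p*t*(X1 ω * Y2 ω) + p*u*(X1 ω * Y3 ω)) μ := j2.add i13
  have j4 : Integrable (fun ω => p*s*(X1 ω * Y1 ω) + p*t*(X1 ω * Y2 ω) + p*u*(X1 ω * Y3 ω) + q*s*(X2 ω * Y1 ω)) μ := j3.add i21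
  have j5 : Integrable (fun ω => p*s*(X1 ω * Y1 ω) + p*t*(X1 ω * Y2 ω) + p*u*(X1 ω * Y3 ω) + q*s*(X2 ω * Y1 ω) + q*t*(X2 ω * Y2 ω)) μ := j4.add i22
  have j6 : Integrable (fun ω => p*s*(X1 ω * Y1 ω) + p*t*(X1 ω * Y2 ω) + p*u*(X1 ω * Y3 ω) + q*s*(X2 ω * Y1 ω) + q*t*(X2 ω * Y2 ω) + q*u*(X2 ω * Y3 ω)) μ := j5.add i23
  have j7 : Integrable (fun ω => p*s*(X1 ω * Y1 ω) + p*t*(X1 ω * Y2 ω) + p*u*(X1 ω * Y3 ω) + q*s*(X2 ω * Y1 ω) + q*t*(X2 ω * Y2 ω) + q*u*(X2 ω * Y3 ω) + r*s*(X3 ω * Y1 ω)) μ := j6.add i31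
  have j8 : Integrable (fun ω => p*s*(X1 ω * Y1 ω) + p*t*(X1 ω * Y2 ω) + p*u*(X1 ω * Y3 ω) + q*s*(X2 ω * Y1 ω) + q*t*(X2 ω * Y2 ω) + q*u*(X2 ω * Y3 ω) + r*s*(X3 ω * Y1 ω) + r*t*(X3 ω * Y2 ω)) μ := j7.add i32
  have e1 : (∫ ω, (p * X1 ω + q * X2 ω + r * X3 ω) * (s * Y1 ω + t * Y2 ω + u * Y3 ω) ∂μ)
      = p*s*(∫ ω, X1 ω * Y1 ω ∂μ) + p*t*(∫ ω, X1 ω * Y2 ω ∂μ) + p*u*(∫ ω, X1 ω * Y3 ω ∂μ)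
      + q*s*(∫ ω, X2 ω * Y1 ω ∂μ) + q*t*(∫ ω, X2 ω * Y2 ω ∂μ) + q*u*(∫ ω, X2 ω * Y3 ω ∂μ)
      + r*s*(∫ ω, X3 ω * Y1 ω ∂μ) + r*t*(∫ ω, X3 ω * Y2 ω ∂μ) + r*u*(∫ ω, X3 ω * Y3 ω ∂μ) := by
    rw [show (fun ω => (p * X1 ω + q * X2 ω + r * X3 ω) * (s * Y1 ω + t * Y2 ω + u * Y3 ω))
        = fun ω => p*s*(X1 ω * Y1 ω) + p*t*(X1 ω * Y2 ω) + p*u*(X1 ω * Y3 ω)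
          + q*s*(X2 ω * Y1 ω) + q*t*(X2 ω * Y2 ω) + q*u*(X2 ω * Y3 ω)
          + r*s*(X3 ω * Y1 ω) + r*t*(X3 ω * Y2 ω) + r*u*(X3 ω * Y3 ω) from funext fun ω => by ring]
    rw [integral_add j8 i33, integral_add j7 i32, integral_add j6 i31, integral_add j5 i23,
      integral_add j4 i22, integral_add j3 i21, integral_add j2 i13, integral_add i11 i12]
    simp only [integral_const_mul]
  have k1 : Integrable (fun ω => p * X1 ω) μ := (h1.integrable one_le_two).const_mul p
  have k2 : Integrable (fun ω => q * X2 ω) μ := (h2.integrable one_le_two).const_mul q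
  have k3 : Integrable (fun ω => r * X3 ω) μ := (h3.integrable one_le_two).const_mul r
  have k4 : Integrable (fun ω => s * Y1 ω) μ := (h4.integrable one_le_two).const_mul s
  have k5 : Integrable (fun ω => t * Y2 ω) μ := (h5.integrable one_le_two).const_mul t
  have k6 : Integrable (fun ω => u * Y3 ω) μ := (h6.integrable one_le_two).const_mul u
  have m1 : (∫ ω, (p * X1 ω + q * X2 ω + r * X3 ω) ∂μ)
      = p*(∫ ω, X1 ω ∂μ) + q*(∫ ω, X2 ω ∂μ) + r*(∫ ω, X3 ω ∂μ) := by
    have k12 : Integrable (fun ω => p * X1 ω + q * X2 ω) μ := k1.add k2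
    rw [integral_add k12 k3, integral_add k1 k2]
    simp only [integral_const_mul]
  have m2 : (∫ ω, (s * Y1 ω + t * Y2 ω + u * Y3 ω) ∂μ)
      = s*(∫ ω, Y1 ω ∂μ) + t*(∫ ω, Y2 ω ∂μ) + u*(∫ ω, Y3 ω ∂μ) := by
    have k45 : Integrable (fun ω => s * Y1 ω + t * Y2 ω) μ := k4.add k5
    rw [integral_add k45 k6, integral_add k4 k5]
    simp only [integral_const_mul]
  simp only [covar, e1, m1, m2]
  ring

lemma covar_self {Ω : Type*} [MeasurableSpace Ω] (μ : Measure Ω) [IsProbabilityMeasure μ]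
    {X : Ω → ℝ} (hX : MemLp X 2 μ) : covar μ X X = variance X μ := by
  rw [variance_eq_sub hX, covar]
  simp [pow_two]

/-- Adjusted-estimator bias in the M-structure with independent latent causes,
perturbed by a direct effect `g` of `W` on the treatment:
`β_T = (dg − cd (ab + cg)) / (1 − (ab + cg)²)`. -/
theorem stmt18 {Ω : Type*} [MeasurableSpace Ω] (μ : Measure Ω) [IsProbabilityMeasure μ]
    (U W εM εT εY : Ω → ℝ)
    (hU2 : MemLp U 2 μ) (hW2 : MemLp W 2 μ) (hεM2 : MemLp εM 2 μ)
    (hεT2 : MemLp εT 2 μ) (hεY2 : MemLp εY 2 μ)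
    (hUm : ∫ ω, U ω ∂μ = 0) (hWm : ∫ ω, W ω ∂μ = 0) (hεMm : ∫ ω, εM ω ∂μ = 0)
    (hεTm : ∫ ω, εT ω ∂μ = 0) (hεYm : ∫ ω, εY ω ∂μ = 0)
    (hUv : variance U μ = 1) (hWv : variance W μ = 1) (hεMv : variance εM μ = 1)
    (hεTv : variance εT μ = 1) (hεYv : variance εY μ = 1)
    (hUW : covar μ U W = 0)
    (hUεM : covar μ U εM = 0) (hUεT : covar μ U εT = 0) (hUεY : covar μ U εY = 0)
    (hWεM : covar μ W εM = 0) (hWεT : covar μ W εT = 0) (hWεY : covar μ W εY = 0)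
    (hεMεT : covar μ εM εT = 0) (hεMεY : covar μ εM εY = 0) (hεTεY : covar μ εT εY = 0)
    (a b c d g : ℝ)
    (hd : d ^ 2 ≤ 1) (hbc : b ^ 2 + c ^ 2 ≤ 1) (hag : a ^ 2 + g ^ 2 ≤ 1)
    (M T Y : Ω → ℝ)
    (hM : M = fun ω => b * U ω + c * W ω + Real.sqrt (1 - b ^ 2 - c ^ 2) * εM ω)
    (hT : T = fun ω => a * U ω + g * W ω + Real.sqrt (1 - a ^ 2 - g ^ 2) * εT ω)
    (hY : Y = fun ω => d * W ω + Real.sqrt (1 - d ^ 2) * εY ω)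
    (hne : 1 - (a * b + c * g) ^ 2 ≠ 0) :
    betaT μ Y T M =
      (d * g - c * d * (a * b + c * g)) / (1 - (a * b + c * g) ^ 2) := by
  have hcomm : ∀ X Z : Ω → ℝ, covar μ X Z = covar μ Z X := by
    intro X Z
    unfold covar
    rw [mul_comm (∫ ω, X ω ∂μ)]
    congr 1
    exact integral_congr_ae (Filter.Eventually.of_forall fun ω => mul_comm _ _)
  set sM := Real.sqrt (1 - b ^ 2 - c ^ 2) with hsM
  set sT := Real.sqrt (1 - a ^ 2 - g ^ 2) with hsT
  set sY := Real.sqrt (1 - d ^ 2) with hsY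
  have hsM2 : sM ^ 2 = 1 - b ^ 2 - c ^ 2 := Real.sq_sqrt (by linarith)
  have hsT2 : sT ^ 2 = 1 - a ^ 2 - g ^ 2 := Real.sq_sqrt (by linarith)
  have hUU : covar μ U U = 1 := by rw [covar_self μ hU2, hUv]
  have hWW : covar μ W W = 1 := by rw [covar_self μ hW2, hWv]
  have hMM : covar μ εM εM = 1 := by rw [covar_self μ hεM2, hεMv]
  have hTT : covar μ εT εT = 1 := by rw [covar_self μ hεT2, hεTv]
  have hYY : covar μ εY εY = 1 := by rw [covar_self μ hεY2, hεYv]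
  have hWU : covar μ W U = 0 := by rw [hcomm]; exact hUW
  have hεMU : covar μ εM U = 0 := by rw [hcomm]; exact hUεM
  have hεTU : covar μ εT U = 0 := by rw [hcomm]; exact hUεT
  have hεYU : covar μ εY U = 0 := by rw [hcomm]; exact hUεY
  have hεMW : covar μ εM W = 0 := by rw [hcomm]; exact hWεM
  have hεTW : covar μ εT W = 0 := by rw [hcomm]; exact hWεT
  have hεYW : covar μ εY W = 0 := by rw [hcomm]; exact hWεY
  have hεTεM : covar μ εT εM = 0 := by rw [hcomm]; exact hεMεT
  have hεYεM : covar μ εY εM = 0 := by rw [hcomm]; exact hεMεY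
  have hεYεT : covar μ εY εT = 0 := by rw [hcomm]; exact hεTεY
  have hY' : Y = fun ω => 0 * U ω + d * W ω + sY * εY ω := by
    rw [hY]; funext ω; ring
  have cYT : covar μ Y T = d * g := by
    rw [hY', hT, covar_expand μ U W εY U W εT hU2 hW2 hεY2 hU2 hW2 hεT2]
    rw [hUU, hWW, hUW, hWU, hUεT, hWεT, hεYU, hεYW, hεYεT]
    ring
  have cYM : covar μ Y M = c * d := by
    rw [hY', hM, covar_expand μ U W εY U W εM hU2 hW2 hεY2 hU2 hW2 hεM2]
    rw [hUU, hWW, hUW, hWU, hUεM, hWεM, hεYU, hεYW, hεYεM]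
    ring
  have cMT : covar μ M T = a * b + c * g := by
    rw [hM, hT, covar_expand μ U W εM U W εT hU2 hW2 hεM2 hU2 hW2 hεT2]
    rw [hUU, hWW, hUW, hWU, hUεT, hWεT, hεMU, hεMW, hεMεT]
    ring
  have hT2 : MemLp T 2 μ := by
    rw [hT]
    exact ((hU2.const_mul a).add (hW2.const_mul g)).add (hεT2.const_mul sT)
  have hM2 : MemLp M 2 μ := by
    rw [hM]
    exact ((hU2.const_mul b).add (hW2.const_mul c)).add (hεM2.const_mul sM)
  have vT : variance T μ = 1 := by
    rw [← covar_self μ hT2, hT, covar_expand μ U W εT U W εT hU2 hW2 hεT2 hU2 hW2 hεT2]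
    rw [hUU, hWW, hTT, hUW, hWU, hUεT, hWεT, hεTU, hεTW]
    linear_combination hsT2
  have vM : variance M μ = 1 := by
    rw [← covar_self μ hM2, hM, covar_expand μ U W εM U W εM hU2 hW2 hεM2 hU2 hW2 hεM2]
    rw [hUU, hWW, hMM, hUW, hWU, hUεM, hWεM, hεMU, hεMW]
    linear_combination hsM2
  rw [betaT, cYT, cYM, cMT, vT, vM]
  ring_nf
end
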